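/- Let δ ∈ K and let f(x) = x^σ + δ·x^(σ^(n−1)). Then f is scattered if and only if there is no nonzero x ∈ K such that ∑_{i=0}^{n−1} z^(e_i) = 0, where z = δ·x^(σ^(n−1)−σ) and e_i = ∑_{j=0}^{i−1} σ^j (so e_0 = 0, e_1 = 1, e_2 = 1+σ, etc.). -/

import Mathlib

open Finset


private lemma sc_pow_red {K : Type*} [Field K] [Fintype K] {q n : ℕ}
    (hK : Fintype.card K = q ^ n) (x : K) (a : ℕ) :
    x ^ q ^ a = x ^ q ^ (a % n) := by
  have base : ∀ b, x ^ q ^ (n + b) = x ^ q ^ b := by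
    intro b
    rw [pow_add, pow_mul, ← hK, FiniteField.pow_card]
  have key : ∀ k b, x ^ q ^ (n * k + b) = x ^ q ^ b := by
    intro k
    induction k with
    | zero => simp
    | succ k ih =>
      intro b
      have h : n * (k + 1) + b = n + (n * k + b) := by ring
      rw [h, base, ih]
  calc x ^ q ^ a = x ^ q ^ (n * (a / n) + a % n) := by rw [Nat.div_add_mod]
    _ = x ^ q ^ (a % n) := key _ _

private lemma sc_char {K : Type*} [Field K] [Fintype K] {q n : ℕ}
    (hq : IsPrimePow q) (hn : 0 < n) (hK : Fintype.card K = q ^ n) :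
    ∃ p e : ℕ, p.Prime ∧ 0 < e ∧ q = p ^ e ∧ CharP K p := by
  obtain ⟨p, e, hp, he, rfl⟩ := hq
  have hp' : p.Prime := hp.nat_prime
  haveI : CharP K (ringChar K) := ringChar.charP K
  have hrp : (ringChar K).Prime := CharP.char_is_prime K _
  obtain ⟨m, -, hcard⟩ := FiniteField.card K (ringChar K)
  have hdvd : p ∣ ringChar K ^ (m : ℕ) := by
    rw [← hcard, hK, ← pow_mul]
    exact dvd_pow_self p (by positivity)
  have hpr : p = ringChar K :=
    (Nat.prime_dvd_prime_iff_eq hp' hrp).1 (hp'.dvd_of_dvd_pow hdvd)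
  exact ⟨p, e, hp', he, rfl, hpr ▸ ringChar.charP K⟩

private lemma sc_pow_add {K : Type*} [Field K] [Fintype K] {q n : ℕ}
    (hq : IsPrimePow q) (hn : 0 < n) (hK : Fintype.card K = q ^ n)
    (a : ℕ) (x y : K) : (x + y) ^ q ^ a = x ^ q ^ a + y ^ q ^ a := by
  obtain ⟨p, e, hp, he, rfl, hc⟩ := sc_char hq hn hK
  haveI := Fact.mk hp
  haveI := hc
  rw [← pow_mul]
  exact add_pow_char_pow x y p (e * a)

private lemma sc_pow_sub {K : Type*} [Field K] [Fintype K] {q n : ℕ}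
    (hq : IsPrimePow q) (hn : 0 < n) (hK : Fintype.card K = q ^ n)
    (a : ℕ) (x y : K) : (x - y) ^ q ^ a = x ^ q ^ a - y ^ q ^ a := by
  obtain ⟨p, e, hp, he, rfl, hc⟩ := sc_char hq hn hK
  haveI := Fact.mk hp
  haveI := hc
  rw [← pow_mul]
  exact sub_pow_char_pow x y (e * a)

private lemma sc_pow_sum {K : Type*} [Field K] [Fintype K] {q n : ℕ}
    (hq : IsPrimePow q) (hn : 0 < n) (hK : Fintype.card K = q ^ n)
    (a : ℕ) {ι : Type*} (s : Finset ι) (f : ι → K) :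
    (∑ i ∈ s, f i) ^ q ^ a = ∑ i ∈ s, f i ^ q ^ a := by
  classical
  induction s using Finset.induction_on with
  | empty => simp [zero_pow (pow_pos hq.pos a).ne']
  | insert _ _ h ih =>
    rw [Finset.sum_insert h, Finset.sum_insert h, sc_pow_add hq hn hK, ih]

private lemma sc_fixed {K : Type*} [Field K] [Fintype K] {q n s : ℕ}
    (hK : Fintype.card K = q ^ n) (hn : 2 ≤ n) (hsn : Nat.Coprime s n)
    (x : K) : x ^ q ^ s = x ↔ x ^ q = x := by
  constructor
  · intro h
    have iter : ∀ k, x ^ q ^ (s * k) = x := by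
      intro k
      induction k with
      | zero => simp
      | succ k ih =>
        have : s * (k + 1) = s + s * k := by ring
        rw [this, pow_add, pow_mul, h]
        exact ih
    obtain ⟨m, -, hm⟩ := Nat.exists_mul_mod_eq_one_of_coprime hsn (by omega)
    calc x ^ q = x ^ q ^ (s * m % n) := by rw [hm, pow_one]
      _ = x ^ q ^ (s * m) := (sc_pow_red hK x _).symm
      _ = x := iter m
  · intro h
    have key : ∀ a, x ^ q ^ a = x := by
      intro a
      induction a with
      | zero => simp
      | succ k ih => rw [pow_succ, pow_mul, ih, h]
    exact key s


private lemma sc_reindex {M : Type*} [AddCommMonoid M] {n s : ℕ} (hn : 0 < n)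
    (hsn : Nat.Coprime s n) (f : ℕ → M) :
    ∑ i ∈ range n, f (s * i % n) = ∑ i ∈ range n, f i := by
  classical
  have hinj : ∀ x ∈ range n, ∀ y ∈ range n, s * x % n = s * y % n → x = y := by
    intro x hx y hy h
    have hmod : x ≡ y [MOD n] :=
      Nat.ModEq.cancel_left_of_coprime (by simpa [Nat.Coprime] using hsn.symm) h
    rwa [Nat.ModEq, Nat.mod_eq_of_lt (mem_range.1 hx), Nat.mod_eq_of_lt (mem_range.1 hy)] at hmod
  have himg : Finset.image (fun i => s * i % n) (range n) = range n := by
    apply Finset.eq_of_subset_of_card_le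
    · intro j hj
      obtain ⟨i, hi, rfl⟩ := Finset.mem_image.1 hj
      exact mem_range.2 (Nat.mod_lt _ hn)
    · rw [Finset.card_image_of_injOn (fun x hx y hy => hinj x hx y hy)]
  calc ∑ i ∈ range n, f (s * i % n)
      = ∑ j ∈ Finset.image (fun i => s * i % n) (range n), f j :=
        (Finset.sum_image hinj).symm
    _ = ∑ i ∈ range n, f i := by rw [himg]

private lemma sc_card_roots {K : Type*} [Field K] [DecidableEq K] (P : Polynomial K) (hP : P ≠ 0)
    (S : Finset K) (h : ∀ x ∈ S, P.eval x = 0) : S.card ≤ P.natDegree := by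
  have hsub : S ⊆ P.roots.toFinset := fun x hx =>
    Multiset.mem_toFinset.2 ((Polynomial.mem_roots hP).2 (h x hx))
  calc S.card ≤ P.roots.toFinset.card := Finset.card_le_card hsub
    _ ≤ Multiset.card P.roots := Multiset.toFinset_card_le _
    _ ≤ P.natDegree := Polynomial.card_roots' P

-- trace polynomial facts
private lemma sc_trpoly {K : Type*} [Field K] {q n : ℕ} (hq : 2 ≤ q) (hn : 0 < n) :
    let P : Polynomial K := ∑ i ∈ range n, Polynomial.X ^ q ^ i
    P ≠ 0 ∧ P.natDegree ≤ q ^ (n - 1) ∧ ∀ x : K, P.eval x = ∑ i ∈ range n, x ^ q ^ i := by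
  intro P
  have hcoeff : P.coeff (q ^ (n - 1)) = 1 := by
    rw [Polynomial.finset_sum_coeff]
    rw [Finset.sum_eq_single (n - 1)]
    · simp [Polynomial.coeff_X_pow]
    · intro b hb hbne
      rw [Polynomial.coeff_X_pow]
      have : q ^ (n - 1) ≠ q ^ b := fun hc =>
        hbne ((Nat.pow_right_injective hq hc.symm))
      rw [if_neg this]
    · intro hmem
      exact absurd (mem_range.2 (by omega)) hmem
  refine ⟨fun h0 => by simp [h0] at hcoeff, ?_, ?_⟩
  · apply Polynomial.natDegree_sum_le_of_forall_le
    intro i hi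
    rw [Polynomial.natDegree_X_pow]
    exact Nat.pow_le_pow_right (by omega) (by have := mem_range.1 hi; omega)
  · intro x
    rw [Polynomial.eval_finset_sum]
    simp

private lemma sc_qpoly {K : Type*} [Field K] {q : ℕ} (hq : 2 ≤ q) :
    let P : Polynomial K := Polynomial.X ^ q - Polynomial.X
    P ≠ 0 ∧ P.natDegree ≤ q ∧ ∀ x : K, P.eval x = x ^ q - x := by
  intro P
  have hcoeff : P.coeff q = 1 := by
    simp [P, Polynomial.coeff_X_pow, Polynomial.coeff_X, Polynomial.coeff_sub]
    omega
  refine ⟨fun h0 => by simp [h0] at hcoeff, ?_, fun x => by simp [P]⟩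
  · apply le_trans (Polynomial.natDegree_sub_le _ _)
    simp [Polynomial.natDegree_X_pow, Polynomial.natDegree_X]
    omega

private lemma sc_add_h90 {K : Type*} [Field K] [Fintype K] {q n s : ℕ}
    (hq : IsPrimePow q) (hn : 2 ≤ n) (hsn : Nat.Coprime s n)
    (hK : Fintype.card K = q ^ n) (w : K)
    (hw : ∑ i ∈ range n, w ^ q ^ (s * i) = 0) :
    ∃ y : K, y ^ q ^ s - y = w := by
  classical
  have hq2 : 2 ≤ q := hq.two_le
  have hn0 : 0 < n := by omega
  -- the trace as sum over q^i equals sum over q^(s*i)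
  have htr : ∀ v : K, ∑ i ∈ range n, v ^ q ^ (s * i) = ∑ i ∈ range n, v ^ q ^ i := by
    intro v
    calc ∑ i ∈ range n, v ^ q ^ (s * i)
        = ∑ i ∈ range n, v ^ q ^ (s * i % n) := by
          exact Finset.sum_congr rfl fun i _ => sc_pow_red hK v _
      _ = ∑ i ∈ range n, v ^ q ^ i := sc_reindex hn0 hsn (fun j => v ^ q ^ j)
  -- φ : y ↦ y^{q^s} - y as additive hom
  let φ : K →+ K :=
    { toFun := fun y => y ^ q ^ s - y
      map_zero' := by simp [zero_pow (pow_pos hq.pos s).ne']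
      map_add' := fun a b => by
        show (a + b) ^ q ^ s - (a + b) = (a ^ q ^ s - a) + (b ^ q ^ s - b)
        rw [sc_pow_add hq hn0 hK s a b]; ring }
  -- range of φ is inside trace-kernel
  have hrange : ∀ y : K, ∑ i ∈ range n, (φ y) ^ q ^ i = 0 := by
    intro y
    rw [← htr (φ y)]
    have hterm : ∀ i, (φ y) ^ q ^ (s * i) = y ^ q ^ (s * (i + 1)) - y ^ q ^ (s * i) := by
      intro i
      show (y ^ q ^ s - y) ^ q ^ (s * i) = _
      rw [sc_pow_sub hq hn0 hK, ← pow_mul, ← pow_add]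
      congr 2
      ring
    calc ∑ i ∈ range n, (φ y) ^ q ^ (s * i)
        = ∑ i ∈ range n, (y ^ q ^ (s * (i + 1)) - y ^ q ^ (s * i)) :=
          Finset.sum_congr rfl fun i _ => hterm i
      _ = y ^ q ^ (s * n) - y ^ q ^ (s * 0) := Finset.sum_range_sub (fun i => y ^ q ^ (s * i)) n
      _ = 0 := by
          rw [sc_pow_red hK y (s * n), Nat.mul_mod_left]
          simp
  -- kernel of φ is inside the q-element set
  have hker : ∀ y : K, φ y = 0 → y ^ q = y := by
    intro y hy
    exact (sc_fixed hK hn hsn y).1 (sub_eq_zero.1 hy)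
  -- cardinalities
  have hcardK : Nat.card K = q ^ n := by rw [Nat.card_eq_fintype_card, hK]
  -- card of kernel ≤ q
  have hker_card : Nat.card φ.ker ≤ q := by
    obtain ⟨hP0, hPdeg, hPeval⟩ := sc_qpoly (K := K) hq2
    have : Nat.card φ.ker = (Finset.univ.filter (fun y : K => φ y = 0)).card := by
      rw [Nat.card_eq_fintype_card]
      rw [← Fintype.card_coe]
      apply Fintype.card_congr
      exact (Equiv.subtypeEquivRight (by intro x; simp [AddMonoidHom.mem_ker, Finset.mem_filter]))
    rw [this]
    refine le_trans (sc_card_roots _ hP0 _ ?_) hPdeg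
    intro x hx
    rw [hPeval]
    have := hker x (Finset.mem_filter.1 hx).2
    rw [this]; ring
  -- card of range ≥ q^(n-1)
  have hiso : Nat.card K = Nat.card φ.range * Nat.card φ.ker := by
    rw [AddSubgroup.card_eq_card_quotient_mul_card_addSubgroup φ.ker]
    congr 1
    exact Nat.card_congr (QuotientAddGroup.quotientKerEquivRange φ).toEquiv
  have hrange_ge : q ^ (n - 1) ≤ Nat.card φ.range := by
    have hq0 : 0 < q := by omega
    have h1 : q ^ n = q ^ (n - 1) * q := by
      rw [← pow_succ]
      congr 1
      omega
    have h2 : q ^ (n - 1) * q ≤ Nat.card φ.range * q := by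
      calc q ^ (n - 1) * q = Nat.card K := by rw [hcardK, h1]
        _ = Nat.card φ.range * Nat.card φ.ker := hiso
        _ ≤ Nat.card φ.range * q := Nat.mul_le_mul_left _ hker_card
    exact Nat.le_of_mul_le_mul_right h2 hq0
  -- the image finset equals the trace-kernel finset
  let RF : Finset K := Finset.univ.image (fun y => φ y)
  let SF : Finset K := Finset.univ.filter (fun v : K => ∑ i ∈ range n, v ^ q ^ i = 0)
  have hRS : RF ⊆ SF := by
    intro v hv
    obtain ⟨y, -, rfl⟩ := Finset.mem_image.1 hv
    exact Finset.mem_filter.2 ⟨Finset.mem_univ _, hrange y⟩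
  have hSF_card : SF.card ≤ q ^ (n - 1) := by
    obtain ⟨hP0, hPdeg, hPeval⟩ := sc_trpoly (K := K) hq2 hn0
    refine le_trans (sc_card_roots _ hP0 _ ?_) hPdeg
    intro x hx
    rw [hPeval]
    exact (Finset.mem_filter.1 hx).2
  have hRF_card : Nat.card φ.range = RF.card := by
    have : (φ.range : Set K) = (RF : Set K) := by
      rw [AddMonoidHom.coe_range]
      simp [RF, Set.ext_iff, Set.mem_range]
    calc Nat.card φ.range = Set.ncard (φ.range : Set K) := (Nat.card_coe_set_eq _).symm
      _ = Set.ncard (RF : Set K) := by rw [this]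
      _ = RF.card := Set.ncard_coe_finset _
  have heq : RF = SF := Finset.eq_of_subset_of_card_le hRS (by
    calc SF.card ≤ q ^ (n - 1) := hSF_card
      _ ≤ Nat.card φ.range := hrange_ge
      _ = RF.card := hRF_card)
  -- conclude
  have hwS : w ∈ SF := Finset.mem_filter.2 ⟨Finset.mem_univ _, by rw [← htr w]; exact hw⟩
  rw [← heq] at hwS
  obtain ⟨y, -, hy⟩ := Finset.mem_image.1 hwS
  exact ⟨y, hy⟩

private lemma sc_gcd {q s n : ℕ} (hq : 2 ≤ q) (hsn : Nat.Coprime s n) :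
    Nat.gcd (q ^ s - 1) (q ^ n - 1) ∣ q - 1 := by
  set d := Nat.gcd (q ^ s - 1) (q ^ n - 1) with hd
  have h1 : d ∣ q ^ s - 1 := Nat.gcd_dvd_left _ _
  have h2 : d ∣ q ^ n - 1 := Nat.gcd_dvd_right _ _
  have hq1 : ∀ m : ℕ, 1 ≤ q ^ m := fun m => Nat.one_le_pow _ _ (by omega)
  have e1 : (q : ZMod d) ^ s = 1 := by
    have h : (1 : ℕ) ≡ q ^ s [MOD d] := (Nat.modEq_iff_dvd' (hq1 s)).2 h1
    have h' := (ZMod.natCast_eq_natCast_iff _ _ _).2 h.symm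
    push_cast at h'
    exact h'
  have e2 : (q : ZMod d) ^ n = 1 := by
    have h : (1 : ℕ) ≡ q ^ n [MOD d] := (Nat.modEq_iff_dvd' (hq1 n)).2 h2
    have h' := (ZMod.natCast_eq_natCast_iff _ _ _).2 h.symm
    push_cast at h'
    exact h'
  have e3 : (q : ZMod d) = 1 := by
    have h := pow_gcd_eq_one.2 ⟨e1, e2⟩
    rwa [hsn, pow_one] at h
  have h : (1 : ℕ) ≡ q [MOD d] := by
    rw [← ZMod.natCast_eq_natCast_iff]
    push_cast
    exact e3.symm
  exact (Nat.modEq_iff_dvd' (by omega)).1 h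

private lemma sc_mul_h90 {K : Type*} [Field K] [Fintype K] {q n s : ℕ}
    (hq : 2 ≤ q) (hn : 2 ≤ n) (hsn : Nat.Coprime s n)
    (hK : Fintype.card K = q ^ n) (z : K) (hz : z ≠ 0)
    (hnorm : z ^ (∑ i ∈ range n, q ^ (s * i)) = 1) :
    ∃ u : K, u ≠ 0 ∧ u ^ q ^ s = z * u := by
  classical
  have hn0 : 0 < n := by omega
  have hq1 : ∀ m : ℕ, 1 ≤ q ^ m := fun m => Nat.one_le_pow _ _ (by omega)
  set N : ℕ := q ^ n - 1 with hN
  have hN0 : 0 < N := by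
    have := Nat.one_lt_pow (by omega : n ≠ 0) (by omega : 1 < q)
    omega
  obtain ⟨g, hg⟩ := IsCyclic.exists_generator (α := Kˣ)
  have hord : orderOf g = N := by
    rw [orderOf_eq_card_of_forall_mem_zpowers hg, Nat.card_eq_fintype_card,
      Fintype.card_units, hK]
  set zu : Kˣ := Units.mk0 z hz with hzu
  obtain ⟨k, hk⟩ := Subgroup.mem_zpowers_iff.1 (hg zu)
  set e : ℕ := ∑ i ∈ range n, q ^ (s * i) with he
  set E : ℕ := ∑ i ∈ range n, q ^ i with hE
  -- e ≡ E mod N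
  have hqn1 : ((q : ZMod N)) ^ n = 1 := by
    have h : (1 : ℕ) ≡ q ^ n [MOD N] := (Nat.modEq_iff_dvd' (hq1 n)).2 dvd_rfl
    have h' := (ZMod.natCast_eq_natCast_iff _ _ _).2 h.symm
    push_cast at h'
    exact h'
  have hred : ∀ a : ℕ, (q : ZMod N) ^ a = (q : ZMod N) ^ (a % n) := by
    intro a
    conv_lhs => rw [← Nat.div_add_mod a n]
    rw [pow_add, pow_mul, hqn1, one_pow, one_mul]
  have hcong : e ≡ E [MOD N] := by
    rw [← ZMod.natCast_eq_natCast_iff]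
    push_cast [he, hE]
    calc ∑ i ∈ range n, (q : ZMod N) ^ (s * i)
        = ∑ i ∈ range n, (q : ZMod N) ^ (s * i % n) :=
          Finset.sum_congr rfl fun i _ => hred _
      _ = ∑ i ∈ range n, (q : ZMod N) ^ i := sc_reindex hn0 hsn (fun j => (q : ZMod N) ^ j)
  -- order of zu divides E
  have hzue : zu ^ e = 1 := by
    ext
    push_cast
    exact hnorm
  have hdE : orderOf zu ∣ E := by
    have d1 : orderOf zu ∣ e := orderOf_dvd_of_pow_eq_one hzue
    have d2 : orderOf zu ∣ N := by
      have h := orderOf_dvd_card (x := zu)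
      rwa [Fintype.card_units, hK] at h
    have h3 : e ≡ E [MOD orderOf zu] := hcong.of_dvd d2
    have h4 : e ≡ 0 [MOD orderOf zu] := (Nat.modEq_zero_iff_dvd).2 d1
    exact (Nat.modEq_zero_iff_dvd).1 (h3.symm.trans h4)
  have hzuE : zu ^ E = 1 := orderOf_dvd_iff_pow_eq_one.1 hdE
  -- (N:ℤ) ∣ k * E
  have hkE : (N : ℤ) ∣ k * (E : ℤ) := by
    rw [← hord, orderOf_dvd_iff_zpow_eq_one]
    rw [zpow_mul, hk, zpow_natCast, hzuE]
  -- (q-1 : ℤ) ∣ k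
  have hNZ : (N : ℤ) = (E : ℤ) * ((q : ℤ) - 1) := by
    have hgeom := geom_sum_mul (q : ℤ) n
    have : (E : ℤ) = ∑ i ∈ range n, (q : ℤ) ^ i := by push_cast [hE]; ring
    rw [this, hgeom, hN]
    push_cast [hq1 n]
    ring
  have hE0 : (E : ℤ) ≠ 0 := by
    have : 0 < E := by
      rw [hE]
      exact Finset.sum_pos (fun i _ => by positivity) (by simp [hn0]; omega)
    exact_mod_cast this.ne'
  have hq1k : ((q : ℤ) - 1) ∣ k := by
    have h : ((E : ℤ) * ((q : ℤ) - 1)) ∣ ((E : ℤ) * k) := by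
      rw [← hNZ, mul_comm (E : ℤ) k] at *
      exact hkE
    exact (mul_dvd_mul_iff_left hE0).1 h
  -- gcd Bezout
  set dn : ℕ := Nat.gcd (q ^ s - 1) N with hdn
  have hdq : dn ∣ q - 1 := sc_gcd hq hsn
  have hdk : (dn : ℤ) ∣ k := by
    refine dvd_trans ?_ hq1k
    have : (dn : ℤ) ∣ ((q - 1 : ℕ) : ℤ) := Int.natCast_dvd_natCast.2 hdq
    rwa [Nat.cast_sub (by omega), Nat.cast_one] at this
  set A : ℤ := Int.gcdA ((q ^ s - 1 : ℕ) : ℤ) ((N : ℕ) : ℤ) with hA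
  set B : ℤ := Int.gcdB ((q ^ s - 1 : ℕ) : ℤ) ((N : ℕ) : ℤ) with hB
  have hbez : ((q ^ s - 1 : ℕ) : ℤ) * A + (N : ℤ) * B = (dn : ℤ) := by
    rw [hA, hB, ← Int.gcd_eq_gcd_ab, Int.gcd_natCast_natCast, hdn]
  obtain ⟨c, hc⟩ := hdk
  set m : ℤ := A * c with hm
  have hqs1 : ((q ^ s - 1 : ℕ) : ℤ) = (q : ℤ) ^ s - 1 := by
    push_cast [hq1 s]
    ring
  have hmk : m * ((q : ℤ) ^ s - 1) - k = (N : ℤ) * (-(c * B)) := by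
    rw [← hqs1]
    linear_combination c * hbez - hc
  -- conclude
  refine ⟨((g ^ m : Kˣ) : K), Units.ne_zero _, ?_⟩
  have h1 : g ^ (m * ((q : ℤ) ^ s - 1)) = g ^ k := by
    have hdvd : ((orderOf g : ℕ) : ℤ) ∣ m * ((q : ℤ) ^ s - 1) - k := by
      rw [hord, hmk]
      exact Dvd.intro _ rfl
    have := orderOf_dvd_iff_zpow_eq_one.1 hdvd
    rw [zpow_sub] at this
    exact (mul_inv_eq_one.1 this)
  have h2 : (g ^ m) ^ ((q ^ s : ℕ) : ℤ) = zu * g ^ m := by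
    have : (m * ((q : ℤ) ^ s - 1)) + m = m * ((q ^ s : ℕ) : ℤ) := by push_cast; ring
    rw [← zpow_mul, ← this, zpow_add, h1, hk]
  have h3 : (g ^ m) ^ (q ^ s : ℕ) = zu * g ^ m := by
    rw [← zpow_natCast]
    exact h2
  have h4 := congrArg (Units.val) h3
  simpa [hzu] using h4

private lemma sc_esucc (Q i : ℕ) :
    (∑ j ∈ range (i + 1), Q ^ j) = (∑ j ∈ range i, Q ^ j) * Q + 1 := by
  rw [Finset.sum_range_succ']
  simp [pow_succ, ← Finset.sum_mul]

private lemma sc_key_sum {K : Type*} [Field K] [Fintype K] {q n : ℕ} (s : ℕ)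
    (hq : IsPrimePow q) (hn : 0 < n) (hK : Fintype.card K = q ^ n) (nn : ℕ) (z : K) :
    z * (∑ i ∈ range nn, z ^ (∑ j ∈ range i, (q ^ s) ^ j)) ^ q ^ s
      = ∑ i ∈ range nn, z ^ (∑ j ∈ range (i + 1), (q ^ s) ^ j) := by
  rw [sc_pow_sum hq hn hK s, Finset.mul_sum]
  refine Finset.sum_congr rfl fun i _ => ?_
  rw [← pow_mul, sc_esucc, pow_add, pow_one]
  ring


open Finset in
/-- `f(x) = x^σ + δ x^(σ^(n-1))` is scattered iff there is no nonzero `x` with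
`∑_{i=0}^{n-1} z^{e_i} = 0`, where `z = δ x^(σ^(n-1)-σ)` and `e_i = ∑_{j<i} σ^j`. -/
theorem stmt_2 (q n s : ℕ) (hq : IsPrimePow q) (hn : 3 ≤ n) (hs : 0 < s)
    (hsn : Nat.Coprime s n) (K : Type*) [Field K] [Fintype K]
    (hK : Fintype.card K = q ^ n) (δ : K) :
    (∀ x t : K, x ≠ 0 → t ≠ 0 →
      x * (t ^ (q ^ s) + δ * t ^ ((q ^ s) ^ (n - 1))) =
        t * (x ^ (q ^ s) + δ * x ^ ((q ^ s) ^ (n - 1))) →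
      ∃ c : K, c ^ q = c ∧ x = c * t) ↔
    ¬∃ x : K, x ≠ 0 ∧
      ∑ i ∈ Finset.range n,
        (δ * x ^ ((q ^ s) ^ (n - 1) - q ^ s)) ^ (∑ j ∈ Finset.range i, (q ^ s) ^ j) = 0 := by
  classical
  have hq2 : 2 ≤ q := hq.two_le
  have hn0 : 0 < n := by omega
  have hn2 : 2 ≤ n := by omega
  have hQ0 : q ^ s ≠ 0 := (pow_pos (by omega : 0 < q) s).ne'
  have hQ1 : 1 ≤ q ^ s := Nat.one_le_pow _ _ (by omega)
  have hQle : q ^ s ≤ (q ^ s) ^ (n - 1) := by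
    calc q ^ s = (q ^ s) ^ 1 := (pow_one _).symm
      _ ≤ (q ^ s) ^ (n - 1) := Nat.pow_le_pow_right hQ1 (by omega)
  have hsplit : ∀ a : K, a ^ ((q ^ s) ^ (n - 1))
      = a ^ ((q ^ s) ^ (n - 1) - q ^ s) * a ^ (q ^ s) := by
    intro a; rw [← pow_add, Nat.sub_add_cancel hQle]
  have hQn : ∀ a : K, a ^ ((q ^ s) ^ n) = a := by
    intro a
    rw [← pow_mul, sc_pow_red hK, Nat.mul_mod_left, pow_zero, pow_one]
  constructor
  · -- scattered → no nonzero solution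
    intro hscat
    rintro ⟨x, hx, hS⟩
    set z : K := δ * x ^ ((q ^ s) ^ (n - 1) - q ^ s) with hzdef
    have hzne : z ≠ 0 := by
      intro hz0
      rw [Finset.sum_eq_single 0] at hS
      · rw [Finset.sum_range_zero, pow_zero] at hS
        exact one_ne_zero hS
      · intro b hb hbne
        rw [hz0, zero_pow]
        have : 0 < ∑ j ∈ range b, (q ^ s) ^ j :=
          Finset.sum_pos (fun j _ => pow_pos (by omega) j) (Finset.nonempty_range_iff.2 hbne)
        omega
      · intro h0
        exact absurd (Finset.mem_range.2 hn0) h0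
    have hsum1 : ∑ i ∈ range n, z ^ (∑ j ∈ range (i + 1), (q ^ s) ^ j) = 0 := by
      rw [← sc_key_sum s hq hn0 hK n z, hS, zero_pow hQ0, mul_zero]
    have hnorm : z ^ (∑ j ∈ range n, (q ^ s) ^ j) = 1 := by
      have h1 := Finset.sum_range_succ' (fun i => z ^ (∑ j ∈ range i, (q ^ s) ^ j)) n
      have h2 := Finset.sum_range_succ (fun i => z ^ (∑ j ∈ range i, (q ^ s) ^ j)) n
      rw [h1] at h2
      simp only [Finset.sum_range_zero, pow_zero] at h2
      rw [hsum1, hS, zero_add, zero_add] at h2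
      exact h2.symm
    have hnorm' : z ^ (∑ i ∈ range n, q ^ (s * i)) = 1 := by
      have he : ∑ i ∈ range n, q ^ (s * i) = ∑ j ∈ range n, (q ^ s) ^ j :=
        Finset.sum_congr rfl fun i _ => pow_mul q s i
      rw [he]; exact hnorm
    obtain ⟨u, hu0, hu⟩ := sc_mul_h90 hq2 hn2 hsn hK z hzne hnorm'
    have hupow : ∀ i, u ^ ((q ^ s) ^ i) = z ^ (∑ j ∈ range i, (q ^ s) ^ j) * u := by
      intro i
      induction i with
      | zero => simp
      | succ k ih =>
        calc u ^ ((q ^ s) ^ (k + 1)) = (u ^ ((q ^ s) ^ k)) ^ (q ^ s) := by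
              rw [pow_succ, pow_mul]
          _ = (z ^ (∑ j ∈ range k, (q ^ s) ^ j) * u) ^ (q ^ s) := by rw [ih]
          _ = z ^ ((∑ j ∈ range k, (q ^ s) ^ j) * (q ^ s)) * (z * u) := by
              rw [mul_pow, ← pow_mul, hu]
          _ = z ^ (∑ j ∈ range (k + 1), (q ^ s) ^ j) * u := by
              rw [sc_esucc]; ring
    have htr : ∑ i ∈ range n, (z * u) ^ q ^ (s * i) = 0 := by
      have hterm : ∀ i, (z * u) ^ q ^ (s * i)
          = z ^ (∑ j ∈ range (i + 1), (q ^ s) ^ j) * u := by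
        intro i
        calc (z * u) ^ q ^ (s * i) = (u ^ (q ^ s)) ^ q ^ (s * i) := by rw [hu]
          _ = u ^ ((q ^ s) ^ (i + 1)) := by
              rw [← pow_mul]
              congr 1
              rw [← pow_mul, ← pow_add]
              congr 1
              ring
          _ = z ^ (∑ j ∈ range (i + 1), (q ^ s) ^ j) * u := hupow (i + 1)
      calc ∑ i ∈ range n, (z * u) ^ q ^ (s * i)
          = ∑ i ∈ range n, z ^ (∑ j ∈ range (i + 1), (q ^ s) ^ j) * u :=
            Finset.sum_congr rfl fun i _ => hterm i
        _ = (∑ i ∈ range n, z ^ (∑ j ∈ range (i + 1), (q ^ s) ^ j)) * u :=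
            (Finset.sum_mul _ _ _).symm
        _ = 0 := by rw [hsum1, zero_mul]
    obtain ⟨y, hy⟩ := sc_add_h90 hq hn2 hsn hK (z * u) htr
    have hyQ : y ^ (q ^ s) = y + z * u := by
      rw [sub_eq_iff_eq_add] at hy
      rw [hy]; ring
    have hzu : z * u ≠ 0 := mul_ne_zero hzne hu0
    have hy0 : y ≠ 0 := by
      intro h0
      rw [h0, zero_pow hQ0, sub_zero] at hy
      exact hzu hy.symm
    have hypow : ∀ i, y ^ ((q ^ s) ^ i)
        = y + (∑ j ∈ range i, z ^ (∑ l ∈ range (j + 1), (q ^ s) ^ l)) * u := by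
      intro i
      induction i with
      | zero => simp
      | succ k ih =>
        calc y ^ ((q ^ s) ^ (k + 1)) = (y ^ ((q ^ s) ^ k)) ^ (q ^ s) := by
              rw [pow_succ, pow_mul]
          _ = (y + (∑ j ∈ range k, z ^ (∑ l ∈ range (j + 1), (q ^ s) ^ l)) * u) ^ (q ^ s) := by
              rw [ih]
          _ = y ^ (q ^ s) + ((∑ j ∈ range k, z ^ (∑ l ∈ range (j + 1), (q ^ s) ^ l)) * u) ^ (q ^ s) :=
              sc_pow_add hq hn0 hK s _ _
          _ = (y + z * u) + (∑ j ∈ range k, z ^ ((∑ l ∈ range (j + 1), (q ^ s) ^ l) * (q ^ s))) * (z * u) := by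
              have hsums : ∑ j ∈ range k, (z ^ (∑ l ∈ range (j + 1), (q ^ s) ^ l)) ^ (q ^ s)
                  = ∑ j ∈ range k, z ^ ((∑ l ∈ range (j + 1), (q ^ s) ^ l) * (q ^ s)) :=
                Finset.sum_congr rfl fun j _ => by rw [← pow_mul]
              rw [hyQ, mul_pow, hu, sc_pow_sum hq hn0 hK s, hsums]
          _ = y + (∑ j ∈ range (k + 1), z ^ (∑ l ∈ range (j + 1), (q ^ s) ^ l)) * u := by
              have hshift : ∑ j ∈ range (k + 1), z ^ (∑ l ∈ range (j + 1), (q ^ s) ^ l)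
                  = (∑ j ∈ range k, z ^ ((∑ l ∈ range (j + 1), (q ^ s) ^ l) * (q ^ s))) * z + z := by
                rw [Finset.sum_range_succ' (fun j => z ^ (∑ l ∈ range (j + 1), (q ^ s) ^ l)) k,
                  Finset.sum_mul]
                congr 1
                · refine Finset.sum_congr rfl fun j _ => ?_
                  rw [sc_esucc, pow_add, pow_one]
                · show z ^ (∑ l ∈ range (0 + 1), (q ^ s) ^ l) = z
                  rw [show (0 : ℕ) + 1 = 1 from rfl, Finset.sum_range_one, pow_zero, pow_one]
              rw [hshift]
              ring
    have hc1 : (∑ j ∈ range (n - 1), z ^ (∑ l ∈ range (j + 1), (q ^ s) ^ l)) = -1 := by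
      have h2 := Finset.sum_range_succ (fun j => z ^ (∑ l ∈ range (j + 1), (q ^ s) ^ l)) (n - 1)
      rw [show n - 1 + 1 = n by omega] at h2
      rw [hsum1, hnorm] at h2
      linear_combination -h2
    have hyn1 : y ^ ((q ^ s) ^ (n - 1)) = y - u := by
      rw [hypow (n - 1), hc1]
      ring
    have hglobal : (y * x) * (x ^ (q ^ s) + δ * x ^ ((q ^ s) ^ (n - 1)))
        = x * ((y * x) ^ (q ^ s) + δ * (y * x) ^ ((q ^ s) ^ (n - 1))) := by
      have h1 : (y * x) ^ (q ^ s) = (y + z * u) * x ^ (q ^ s) := by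
        rw [mul_pow, hyQ]
      have h2 : (y * x) ^ ((q ^ s) ^ (n - 1))
          = (y - u) * (x ^ ((q ^ s) ^ (n - 1) - q ^ s) * x ^ (q ^ s)) := by
        rw [mul_pow, hyn1, ← hsplit]
      rw [h1, h2, hsplit x, hzdef]
      ring
    obtain ⟨c, hcq, hcx⟩ := hscat (y * x) x (mul_ne_zero hy0 hx) hx hglobal
    have hyc : y = c := mul_right_cancel₀ hx hcx
    have hyfix : y ^ (q ^ s) = y := (sc_fixed hK hn2 hsn y).2 (by rw [hyc]; exact hcq)
    rw [hyfix, sub_self] at hy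
    exact hzu hy.symm
  · intro H x t hx ht heq
    obtain ⟨y, hxy⟩ : ∃ y : K, x = y * t := ⟨x * t⁻¹, by field_simp⟩
    by_cases hyq : y ^ q = y
    · exact ⟨y, hyq, hxy⟩
    exfalso
    set z : K := δ * t ^ ((q ^ s) ^ (n - 1) - q ^ s) with hzdef
    have E0 : y + z * y = y ^ (q ^ s) + z * y ^ ((q ^ s) ^ (n - 1)) := by
      have hT : (t ^ (q ^ s) * t) ≠ 0 := mul_ne_zero (pow_ne_zero _ ht) ht
      apply mul_right_cancel₀ hT
      rw [hxy, mul_pow, mul_pow, hsplit t] at heq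
      rw [hzdef]
      linear_combination heq
    have E1 : y ^ (q ^ s) - y = z * (y - y ^ ((q ^ s) ^ (n - 1))) := by
      linear_combination -E0
    have hyQ : y ^ (q ^ s) ≠ y := fun h => hyq ((sc_fixed hK hn2 hsn y).1 h)
    have hv : y - y ^ ((q ^ s) ^ (n - 1)) ≠ 0 := by
      intro h0
      rw [h0, mul_zero] at E1
      exact hyQ (sub_eq_zero.1 E1)
    have hz0 : z ≠ 0 := by
      intro h0
      rw [h0, zero_mul] at E1
      exact hyQ (sub_eq_zero.1 E1)
    have hvQ : (y - y ^ ((q ^ s) ^ (n - 1))) ^ (q ^ s)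
        = z * (y - y ^ ((q ^ s) ^ (n - 1))) := by
      rw [sc_pow_sub hq hn0 hK s, ← pow_mul y ((q ^ s) ^ (n - 1)) (q ^ s),
        ← pow_succ (q ^ s) (n - 1), show n - 1 + 1 = n by omega, hQn]
      exact E1
    have claim : ∀ i, y ^ ((q ^ s) ^ (i + 1)) - y ^ ((q ^ s) ^ i)
        = z ^ (∑ j ∈ range (i + 1), (q ^ s) ^ j) * (y - y ^ ((q ^ s) ^ (n - 1))) := by
      intro i
      induction i with
      | zero => simpa using E1
      | succ k ih =>
        calc y ^ ((q ^ s) ^ (k + 1 + 1)) - y ^ ((q ^ s) ^ (k + 1))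
            = (y ^ ((q ^ s) ^ (k + 1))) ^ (q ^ s) - (y ^ ((q ^ s) ^ k)) ^ (q ^ s) := by
              rw [pow_succ ((q ^ s)) (k + 1), pow_mul, pow_succ ((q ^ s)) k, pow_mul]
          _ = (y ^ ((q ^ s) ^ (k + 1)) - y ^ ((q ^ s) ^ k)) ^ (q ^ s) :=
              (sc_pow_sub hq hn0 hK s _ _).symm
          _ = (z ^ (∑ j ∈ range (k + 1), (q ^ s) ^ j) * (y - y ^ ((q ^ s) ^ (n - 1)))) ^ (q ^ s) := by
              rw [ih]
          _ = z ^ ((∑ j ∈ range (k + 1), (q ^ s) ^ j) * (q ^ s))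
                * (z * (y - y ^ ((q ^ s) ^ (n - 1)))) := by
              rw [mul_pow, ← pow_mul z (∑ j ∈ range (k + 1), (q ^ s) ^ j) (q ^ s), hvQ]
          _ = z ^ (∑ j ∈ range (k + 1 + 1), (q ^ s) ^ j) * (y - y ^ ((q ^ s) ^ (n - 1))) := by
              rw [sc_esucc ((q ^ s)) (k + 1)]
              ring
    have hsumv : (∑ i ∈ range n, z ^ (∑ j ∈ range (i + 1), (q ^ s) ^ j))
        * (y - y ^ ((q ^ s) ^ (n - 1))) = 0 := by
      rw [Finset.sum_mul]
      calc ∑ i ∈ range n, z ^ (∑ j ∈ range (i + 1), (q ^ s) ^ j) * (y - y ^ ((q ^ s) ^ (n - 1)))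
          = ∑ i ∈ range n, (y ^ ((q ^ s) ^ (i + 1)) - y ^ ((q ^ s) ^ i)) :=
            Finset.sum_congr rfl fun i _ => (claim i).symm
        _ = y ^ ((q ^ s) ^ n) - y ^ ((q ^ s) ^ 0) :=
            Finset.sum_range_sub (fun i => y ^ ((q ^ s) ^ i)) n
        _ = 0 := by rw [hQn, pow_zero, pow_one, sub_self]
    have hsum0 : ∑ i ∈ range n, z ^ (∑ j ∈ range (i + 1), (q ^ s) ^ j) = 0 :=
      (mul_eq_zero.1 hsumv).resolve_right hv
    have hSz : ∑ i ∈ range n, z ^ (∑ j ∈ range i, (q ^ s) ^ j) = 0 := by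
      have hk := sc_key_sum s hq hn0 hK n z
      rw [hsum0] at hk
      rcases mul_eq_zero.1 hk with h | h
      · exact absurd h hz0
      · exact pow_eq_zero_iff hQ0 |>.1 h
    exact H ⟨t, ht, hSz⟩
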